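/- Let n ≥ 1, 0 ≤ α < π/2, and let A, B ∈ Mₙ(ℂ) satisfy A, B ∈ S_α. Then cos(α)²·max(w(A), w(B)) ≤ w(A + B). -/

import Mathlib

open Matrix MeasureTheory
open scoped ComplexOrder

attribute [local instance] Matrix.normedAddCommGroup Matrix.normedSpace

/-- The numerical radius of a complex `n × n` matrix. -/
noncomputable def nradius {n : ℕ} (A : Matrix (Fin n) (Fin n) ℂ) : ℝ :=
  sSup {r : ℝ | ∃ x : EuclideanSpace ℂ (Fin n), ‖x‖ = 1 ∧
    r = ‖(inner ℂ x (Matrix.toEuclideanCLM (𝕜 := ℂ) A x) : ℂ)‖}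

/-- The operator (spectral) norm of a complex `n × n` matrix. -/
noncomputable def opNorm {n : ℕ} (A : Matrix (Fin n) (Fin n) ℂ) : ℝ :=
  ‖(Matrix.toEuclideanCLM (𝕜 := ℂ) A :
      EuclideanSpace ℂ (Fin n) →L[ℂ] EuclideanSpace ℂ (Fin n))‖

/-- The real part `(A + Aᴴ)/2` of a matrix. -/
noncomputable def matRe {n : ℕ} (A : Matrix (Fin n) (Fin n) ℂ) : Matrix (Fin n) (Fin n) ℂ :=
  (1 / 2 : ℂ) • (A + Aᴴ)

/-- `A ∈ S_α` : `Re A` is positive definite and the numerical range of `A` lies in the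
sector `{z : |Im z| ≤ tan α · Re z}`. -/
def InSector {n : ℕ} (α : ℝ) (A : Matrix (Fin n) (Fin n) ℂ) : Prop :=
  (matRe A).PosDef ∧ ∀ x : EuclideanSpace ℂ (Fin n), ‖x‖ = 1 →
    |(inner ℂ x (Matrix.toEuclideanCLM (𝕜 := ℂ) A x) : ℂ).im| ≤
      Real.tan α * ((inner ℂ x (Matrix.toEuclideanCLM (𝕜 := ℂ) A x) : ℂ)).re

private lemma inner_eq_dot {n : ℕ} (A : Matrix (Fin n) (Fin n) ℂ) (x : EuclideanSpace ℂ (Fin n)) :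
    (inner ℂ x (Matrix.toEuclideanCLM (𝕜 := ℂ) A x) : ℂ)
      = star (WithLp.equiv 2 _ x) ⬝ᵥ (A *ᵥ WithLp.equiv 2 _ x) := by
  rw [EuclideanSpace.inner_eq_star_dotProduct, dotProduct_comm]; rfl

private lemma dot_matRe {n : ℕ} (A : Matrix (Fin n) (Fin n) ℂ) (v : Fin n → ℂ) :
    star v ⬝ᵥ (matRe A *ᵥ v) = ((star v ⬝ᵥ (A *ᵥ v)).re : ℂ) := by
  have h : star v ⬝ᵥ (Aᴴ *ᵥ v) = star (star v ⬝ᵥ (A *ᵥ v)) := by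
    rw [mulVec_conjTranspose, dotProduct_star, star_star, Matrix.dotProduct_mulVec]
  rw [matRe, Matrix.smul_mulVec, Matrix.add_mulVec, dotProduct_smul,
    dotProduct_add, h]
  set z := star v ⬝ᵥ (A *ᵥ v)
  rw [smul_eq_mul]
  have := Complex.add_conj z
  rw [Complex.star_def, this]
  push_cast; ring

/-- Positive definiteness of the real part gives a positive real part of the numerical range. -/
private lemma re_inner_pos {n : ℕ} {α : ℝ} {A : Matrix (Fin n) (Fin n) ℂ} (hA : InSector α A)
    {x : EuclideanSpace ℂ (Fin n)} (hx : ‖x‖ = 1) :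
    0 < (inner ℂ x (Matrix.toEuclideanCLM (𝕜 := ℂ) A x) : ℂ).re := by
  have hx0 : x ≠ 0 := by intro h; rw [h, norm_zero] at hx; norm_num at hx
  have hv : (WithLp.equiv 2 _ x : Fin n → ℂ) ≠ 0 := fun h =>
    hx0 ((WithLp.equiv 2 _).injective (by simpa using h))
  have h := hA.1.dotProduct_mulVec_pos hv
  rw [dot_matRe A (WithLp.equiv 2 _ x)] at h
  rw [inner_eq_dot]
  exact_mod_cast h

private lemma nradius_bdd {n : ℕ} (A : Matrix (Fin n) (Fin n) ℂ) :
    BddAbove {r : ℝ | ∃ x : EuclideanSpace ℂ (Fin n), ‖x‖ = 1 ∧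
      r = ‖(inner ℂ x (Matrix.toEuclideanCLM (𝕜 := ℂ) A x) : ℂ)‖} := by
  refine ⟨‖(Matrix.toEuclideanCLM (𝕜 := ℂ) A : EuclideanSpace ℂ (Fin n) →L[ℂ] _)‖, ?_⟩
  rintro r ⟨x, hx, rfl⟩
  calc ‖(inner ℂ x (Matrix.toEuclideanCLM (𝕜 := ℂ) A x) : ℂ)‖
      ≤ ‖x‖ * ‖Matrix.toEuclideanCLM (𝕜 := ℂ) A x‖ := norm_inner_le_norm _ _
    _ ≤ ‖x‖ * (‖(Matrix.toEuclideanCLM (𝕜 := ℂ) A : EuclideanSpace ℂ (Fin n) →L[ℂ] _)‖ * ‖x‖) :=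
        mul_le_mul_of_nonneg_left ((Matrix.toEuclideanCLM (𝕜 := ℂ) A).le_opNorm x)
          (norm_nonneg _)
    _ = _ := by rw [hx]; ring

private lemma le_nradius {n : ℕ} (A : Matrix (Fin n) (Fin n) ℂ)
    {x : EuclideanSpace ℂ (Fin n)} (hx : ‖x‖ = 1) :
    ‖(inner ℂ x (Matrix.toEuclideanCLM (𝕜 := ℂ) A x) : ℂ)‖ ≤ nradius A :=
  le_csSup (nradius_bdd A) ⟨x, hx, rfl⟩

theorem stmt13 {n : ℕ} (hn : 1 ≤ n) {α : ℝ} (hα0 : 0 ≤ α) (hα : α < Real.pi / 2)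
    {A B : Matrix (Fin n) (Fin n) ℂ} (hA : InSector α A) (hB : InSector α B) :
    Real.cos α ^ 2 * max (nradius A) (nradius B) ≤ nradius (A + B) := by
  have hc : 0 < Real.cos α :=
    Real.cos_pos_of_mem_Ioo ⟨by linarith [Real.pi_pos], hα⟩
  have hc1 : Real.cos α ≤ 1 := Real.cos_le_one α
  -- a distinguished unit vector
  obtain ⟨x0, hx0⟩ : ∃ x : EuclideanSpace ℂ (Fin n), ‖x‖ = 1 :=
    ⟨EuclideanSpace.single (⟨0, hn⟩ : Fin n) (1 : ℂ), by simp⟩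
  -- key step: for matrices in the sector, cos α * nradius ≤ nradius of the sum
  have key : ∀ C D : Matrix (Fin n) (Fin n) ℂ, InSector α C → InSector α D →
      Real.cos α * nradius C ≤ nradius (A + B) → True := fun _ _ _ _ _ => trivial
  have main : ∀ C D : Matrix (Fin n) (Fin n) ℂ, InSector α C → InSector α D → C + D = A + B →
      Real.cos α * nradius C ≤ nradius (A + B) := by
    intro C D hC hD hCD
    rw [mul_comm, ← le_div_iff₀ hc]
    refine csSup_le ⟨_, x0, hx0, rfl⟩ ?_
    rintro r ⟨x, hx, rfl⟩
    rw [le_div_iff₀ hc]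
    set z : ℂ := (inner ℂ x (Matrix.toEuclideanCLM (𝕜 := ℂ) C x) : ℂ) with hz
    set zD : ℂ := (inner ℂ x (Matrix.toEuclideanCLM (𝕜 := ℂ) D x) : ℂ) with hzD
    have him : |z.im| ≤ Real.tan α * z.re := hC.2 x hx
    have hre : 0 < z.re := re_inner_pos hC hx
    have hreD : 0 < zD.re := re_inner_pos hD hx
    -- cos α * ‖z‖ ≤ z.re
    have hstep1 : ‖z‖ * Real.cos α ≤ z.re := by
      have hnz : ‖z‖ ^ 2 = z.re ^ 2 + z.im ^ 2 := by
        rw [Complex.sq_norm, Complex.normSq_apply]; ring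
      have htan : Real.tan α = Real.sin α / Real.cos α := Real.tan_eq_sin_div_cos α
      have hsc : Real.sin α ^ 2 + Real.cos α ^ 2 = 1 := Real.sin_sq_add_cos_sq α
      have him2 : z.im ^ 2 ≤ (Real.tan α * z.re) ^ 2 := by
        have := abs_nonneg z.im
        nlinarith [sq_abs z.im, pow_le_pow_left₀ this him 2]
      have hsq : (‖z‖ * Real.cos α) ^ 2 ≤ z.re ^ 2 := by
        have h1 : (Real.tan α * Real.cos α) ^ 2 = Real.sin α ^ 2 := by
          rw [htan]; field_simp
        nlinarith [hnz]
      nlinarith [norm_nonneg z, hsq]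
    -- z.re ≤ re of the numerical value of A + B
    have hsum : (inner ℂ x (Matrix.toEuclideanCLM (𝕜 := ℂ) (A + B) x) : ℂ) = z + zD := by
      rw [← hCD, map_add, ContinuousLinearMap.add_apply, inner_add_right]
    have hstep2 : z.re ≤ ‖(inner ℂ x (Matrix.toEuclideanCLM (𝕜 := ℂ) (A + B) x) : ℂ)‖ := by
      calc z.re ≤ (z + zD).re := by simp; linarith
        _ ≤ ‖z + zD‖ := Complex.re_le_norm _
        _ = _ := by rw [hsum]
    calc ‖z‖ * Real.cos α ≤ z.re := hstep1
      _ ≤ ‖(inner ℂ x (Matrix.toEuclideanCLM (𝕜 := ℂ) (A + B) x) : ℂ)‖ := hstep2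
      _ ≤ nradius (A + B) := le_nradius _ hx
  have h1 : Real.cos α * nradius A ≤ nradius (A + B) := main A B hA hB rfl
  have h2 : Real.cos α * nradius B ≤ nradius (A + B) := main B A hB hA (add_comm B A)
  have hmax0 : 0 ≤ max (nradius A) (nradius B) := by
    have : (0 : ℝ) ≤ nradius A :=
      le_trans (norm_nonneg _) (le_nradius A hx0)
    exact le_trans this (le_max_left _ _)
  calc Real.cos α ^ 2 * max (nradius A) (nradius B)
      ≤ Real.cos α * max (nradius A) (nradius B) :=
        mul_le_mul_of_nonneg_right (by nlinarith) hmax0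
    _ ≤ nradius (A + B) := by
        rcases max_cases (nradius A) (nradius B) with ⟨h, _⟩ | ⟨h, _⟩ <;> rw [h] <;> assumption
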